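/- Let Y ⊆ ℝ^d be compact, let μ be a Borel probability measure on Y, let ε > 0, and let φ : Y → ℝ be continuous. For each y₁ ∈ Y define f_{y₁} : Y → ℝ by f_{y₁}(y₀) := exp((⟨y₀, y₁⟩ − φ(y₀))/ε) / ∫_Y exp((⟨y₀'', y₁⟩ − φ(y₀''))/ε) dμ(y₀''). Then the family {f_{y₁} : y₁ ∈ Y} is uniformly bounded (there exists C < ∞ with |f_{y₁}(y₀)| ≤ C for all y₀, y₁ ∈ Y) and uniformly equicontinuous: for every δ > 0 there exists η > 0 such that for all y₁ ∈ Y and all y₀, y₀' ∈ Y with ‖y₀ − y₀'‖ < η, |f_{y₁}(y₀) − f_{y₁}(y₀')| < δ. -/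

import Mathlib

open MeasureTheory
open scoped RealInnerProductSpace ENNReal

lemma exp_lip_aux {s t B : ℝ} (hs : s ≤ B) (ht : t ≤ B) (h : t ≤ s) :
    Real.exp s - Real.exp t ≤ Real.exp B * (s - t) := by
  have h1 : (t - s) + 1 ≤ Real.exp (t - s) := Real.add_one_le_exp _
  have h2 : Real.exp (t - s) * Real.exp s = Real.exp t := by
    rw [← Real.exp_add]; ring_nf
  have h3 : Real.exp s ≤ Real.exp B := Real.exp_le_exp.2 hs
  nlinarith [Real.exp_pos s, Real.exp_pos B]

lemma exp_lip {s t B : ℝ} (hs : s ≤ B) (ht : t ≤ B) :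
    |Real.exp s - Real.exp t| ≤ Real.exp B * |s - t| := by
  rcases le_total t s with h | h
  · rw [abs_of_nonneg (sub_nonneg.2 (Real.exp_le_exp.2 h)), abs_of_nonneg (sub_nonneg.2 h)]
    exact exp_lip_aux hs ht h
  · rw [abs_sub_comm, abs_sub_comm s t,
      abs_of_nonneg (sub_nonneg.2 (Real.exp_le_exp.2 h)), abs_of_nonneg (sub_nonneg.2 h)]
    exact exp_lip_aux ht hs h

/-- the family of normalized tilted densities
`f_{y₁}(y₀) = exp((⟪y₀,y₁⟫ - φ y₀)/ε) / ∫_Y exp((⟪y₀'',y₁⟫ - φ y₀'')/ε) dμ(y₀'')`,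
indexed by `y₁ ∈ Y`, is uniformly bounded and uniformly equicontinuous on a compact
`Y ⊆ ℝ^d`. -/
theorem stmt18 {d : ℕ} (Y : Set (EuclideanSpace ℝ (Fin d))) (hY : IsCompact Y)
    (μ : Measure (EuclideanSpace ℝ (Fin d))) [IsProbabilityMeasure μ]
    (hμY : μ Yᶜ = 0)
    (ε : ℝ) (hε : 0 < ε)
    (φ : EuclideanSpace ℝ (Fin d) → ℝ) (hφ : ContinuousOn φ Y)
    (f : EuclideanSpace ℝ (Fin d) → EuclideanSpace ℝ (Fin d) → ℝ)
    (hf : ∀ y₁ y₀, f y₁ y₀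
      = Real.exp ((⟪y₀, y₁⟫ - φ y₀) / ε)
        / ∫ z in Y, Real.exp ((⟪z, y₁⟫ - φ z) / ε) ∂μ) :
    (∃ C : ℝ, ∀ y₁ ∈ Y, ∀ y₀ ∈ Y, |f y₁ y₀| ≤ C) ∧
    (∀ δ : ℝ, 0 < δ → ∃ η : ℝ, 0 < η ∧
      ∀ y₁ ∈ Y, ∀ y₀ ∈ Y, ∀ y₀' ∈ Y,
        ‖y₀ - y₀'‖ < η → |f y₁ y₀ - f y₁ y₀'| < δ) := by
  have hYm : MeasurableSet Y := hY.isClosed.measurableSet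
  have hμY1 : μ Y = 1 := by
    have h := measure_add_measure_compl (μ := μ) hYm
    rw [hμY, add_zero, measure_univ] at h
    exact h
  -- bound on norms of elements of Y
  obtain ⟨R, hR0, hR⟩ : ∃ R : ℝ, 0 ≤ R ∧ ∀ y ∈ Y, ‖y‖ ≤ R := by
    obtain ⟨R, hR⟩ := isBounded_iff_forall_norm_le.1 hY.isBounded
    exact ⟨max R 0, le_max_right _ _, fun y hy => (hR y hy).trans (le_max_left _ _)⟩
  -- bound on φ
  obtain ⟨M, hM0, hM⟩ : ∃ M : ℝ, 0 ≤ M ∧ ∀ y ∈ Y, |φ y| ≤ M := by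
    obtain ⟨M, hM⟩ := hY.exists_bound_of_continuousOn hφ
    exact ⟨max M 0, le_max_right _ _, fun y hy => (hM y hy).trans (le_max_left _ _)⟩
  set B : ℝ := (R * R + M) / ε with hBdef
  have hB0 : 0 ≤ B := div_nonneg (by nlinarith) hε.le
  -- bound on the exponent
  have harg : ∀ y₁ ∈ Y, ∀ y₀ ∈ Y, |(⟪y₀, y₁⟫ - φ y₀) / ε| ≤ B := by
    intro y₁ hy₁ y₀ hy₀
    rw [abs_div, abs_of_pos hε, hBdef, div_le_div_iff_of_pos_right hε]
    have h1 : |⟪y₀, y₁⟫| ≤ R * R := by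
      calc |⟪y₀, y₁⟫| ≤ ‖y₀‖ * ‖y₁‖ := abs_real_inner_le_norm _ _
        _ ≤ R * R := mul_le_mul (hR _ hy₀) (hR _ hy₁) (norm_nonneg _) hR0
    calc |⟪y₀, y₁⟫ - φ y₀| ≤ |⟪y₀, y₁⟫| + |φ y₀| := abs_sub _ _
      _ ≤ R * R + M := add_le_add h1 (hM _ hy₀)
  set a : ℝ := Real.exp (-B) with hadef
  have ha0 : 0 < a := Real.exp_pos _
  -- continuity and integrability of the integrand
  have hcont : ∀ y₁ : EuclideanSpace ℝ (Fin d),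
      ContinuousOn (fun z => Real.exp ((⟪z, y₁⟫ - φ z) / ε)) Y := by
    intro y₁
    exact Real.continuous_exp.comp_continuousOn
      ((((continuous_id.inner continuous_const).continuousOn).sub hφ).div_const ε)
  have hint : ∀ y₁ : EuclideanSpace ℝ (Fin d),
      IntegrableOn (fun z => Real.exp ((⟪z, y₁⟫ - φ z) / ε)) Y μ := fun y₁ =>
    (hcont y₁).integrableOn_compact hY
  -- lower bound for the denominator
  have hden : ∀ y₁ ∈ Y, a ≤ ∫ z in Y, Real.exp ((⟪z, y₁⟫ - φ z) / ε) ∂μ := by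
    intro y₁ hy₁
    have h1 : ∫ z in Y, a ∂μ ≤ ∫ z in Y, Real.exp ((⟪z, y₁⟫ - φ z) / ε) ∂μ := by
      refine setIntegral_mono_on (integrable_const a).integrableOn (hint y₁) hYm ?_
      intro z hz
      rw [hadef]
      exact Real.exp_le_exp.2 (neg_le_of_abs_le (harg y₁ hy₁ z hz))
    rwa [setIntegral_const, measureReal_def, hμY1, ENNReal.toReal_one, one_smul] at h1
  constructor
  · refine ⟨Real.exp B / a, ?_⟩
    intro y₁ hy₁ y₀ hy₀
    rw [hf]
    have hD := hden y₁ hy₁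
    have hDpos : 0 < ∫ z in Y, Real.exp ((⟪z, y₁⟫ - φ z) / ε) ∂μ := ha0.trans_le hD
    rw [abs_div, abs_of_pos (Real.exp_pos _), abs_of_pos hDpos]
    exact div_le_div₀ (Real.exp_pos B).le
      (Real.exp_le_exp.2 (le_of_abs_le (harg y₁ hy₁ y₀ hy₀))) ha0 hD
  · intro δ hδ
    set K : ℝ := Real.exp B / a with hKdef
    have hK0 : 0 < K := div_pos (Real.exp_pos _) ha0
    set c : ℝ := δ / K with hcdef
    have hc0 : 0 < c := div_pos hδ hK0
    -- uniform continuity of φ on Y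
    obtain ⟨η₁, hη₁0, hη₁⟩ := Metric.uniformContinuousOn_iff.1
      (hY.uniformContinuousOn_of_continuous hφ) (c * ε / 2) (by positivity)
    refine ⟨min η₁ (c * ε / (2 * (R + 1))), lt_min hη₁0 (by positivity), ?_⟩
    intro y₁ hy₁ y₀ hy₀ y₀' hy₀' hnorm
    rw [hf, hf, div_sub_div_same]
    have hD := hden y₁ hy₁
    have hDpos : 0 < ∫ z in Y, Real.exp ((⟪z, y₁⟫ - φ z) / ε) ∂μ := ha0.trans_le hD
    set u : ℝ := (⟪y₀, y₁⟫ - φ y₀) / ε with hudef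
    set u' : ℝ := (⟪y₀', y₁⟫ - φ y₀') / ε with hu'def
    -- bound |u - u'|
    have hφd : |φ y₀ - φ y₀'| < c * ε / 2 := by
      have := hη₁ y₀ hy₀ y₀' hy₀'
        (by rw [dist_eq_norm]; exact hnorm.trans_le (min_le_left _ _))
      rwa [Real.dist_eq] at this
    have hinner : |⟪y₀, y₁⟫ - ⟪y₀', y₁⟫| < c * ε / 2 := by
      have h1 : |⟪y₀ - y₀', y₁⟫| ≤ ‖y₀ - y₀'‖ * ‖y₁‖ := abs_real_inner_le_norm _ _
      rw [inner_sub_left] at h1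
      have h2 : ‖y₀ - y₀'‖ * ‖y₁‖ ≤ ‖y₀ - y₀'‖ * (R + 1) :=
        mul_le_mul_of_nonneg_left (by linarith [hR _ hy₁]) (norm_nonneg _)
      have h3 : ‖y₀ - y₀'‖ < c * ε / (2 * (R + 1)) :=
        hnorm.trans_le (min_le_right _ _)
      have hR1 : (0:ℝ) < R + 1 := by linarith
      calc |⟪y₀, y₁⟫ - ⟪y₀', y₁⟫| ≤ ‖y₀ - y₀'‖ * (R + 1) := h1.trans h2
        _ < (c * ε / (2 * (R + 1))) * (R + 1) := by
            exact mul_lt_mul_of_pos_right h3 hR1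
        _ = c * ε / 2 := by field_simp
    have huu' : |u - u'| < c := by
      have h1 : u - u' = ((⟪y₀, y₁⟫ - ⟪y₀', y₁⟫) - (φ y₀ - φ y₀')) / ε := by
        rw [hudef, hu'def]; ring
      rw [h1, abs_div, abs_of_pos hε, div_lt_iff₀ hε]
      calc |(⟪y₀, y₁⟫ - ⟪y₀', y₁⟫) - (φ y₀ - φ y₀')|
          ≤ |⟪y₀, y₁⟫ - ⟪y₀', y₁⟫| + |φ y₀ - φ y₀'| := abs_sub _ _
        _ < c * ε / 2 + c * ε / 2 := add_lt_add hinner hφd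
        _ = c * ε := by ring
    -- conclude
    have hexp : |Real.exp u - Real.exp u'| ≤ Real.exp B * |u - u'| :=
      exp_lip (le_of_abs_le (harg y₁ hy₁ y₀ hy₀)) (le_of_abs_le (harg y₁ hy₁ y₀' hy₀'))
    have hfinal : |Real.exp u - Real.exp u'| / ∫ z in Y, Real.exp ((⟪z, y₁⟫ - φ z) / ε) ∂μ
        ≤ |Real.exp u - Real.exp u'| / a :=
      div_le_div_of_nonneg_left (abs_nonneg _) ha0 hD
    rw [abs_div, abs_of_pos hDpos]
    calc |Real.exp u - Real.exp u'| / ∫ z in Y, Real.exp ((⟪z, y₁⟫ - φ z) / ε) ∂μ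
        ≤ |Real.exp u - Real.exp u'| / a := hfinal
      _ ≤ (Real.exp B * |u - u'|) / a := by
          exact div_le_div_of_nonneg_right hexp ha0.le
      _ = K * |u - u'| := by rw [hKdef]; ring
      _ < K * c := by exact mul_lt_mul_of_pos_left huu' hK0
      _ = δ := by rw [hcdef]; field_simp
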